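/- Let f₁, …, f_n, g₁, …, g_n ∈ L^∞(∂D) and z ∈ D. Then V⁻¹ [ Σᵢ (H_{fᵢ}* H_{gᵢ} − T_{φ_z}* H_{fᵢ}* H_{gᵢ} T_{φ_z}) ] V = Σᵢ H_{fᵢ} k_z ⊗ H_{gᵢ} k_z, where V is the antiunitary (Vh)(w) = w̄ conj(h(w)) and k_z is the normalized reproducing kernel. In particular the operator Σᵢ (H_{fᵢ}* H_{gᵢ} − T_{φ_z}* H_{fᵢ}* H_{gᵢ} T_{φ_z}) has rank at most n. -/

import Mathlib

noncomputable section
open MeasureTheory Complex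
open scoped InnerProductSpace ComplexConjugate

set_option synthInstance.maxHeartbeats 400000

namespace HardySpace

instance fact_two_pi_pos : Fact (0 < 2 * Real.pi) := ⟨by positivity⟩
abbrev 𝕋 : Type := AddCircle (2 * Real.pi)
abbrev μT : Measure 𝕋 := AddCircle.haarAddCircle
abbrev L2 : Type := Lp ℂ 2 μT
def cw : 𝕋 → ℂ := fun x => fourier 1 x
def Hardy : Submodule ℂ L2 :=
  (Submodule.span ℂ (Set.range fun n : ℕ => (fourierLp 2 (n : ℤ) : L2))).topologicalClosure
instance : CompleteSpace Hardy :=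
  (Submodule.isClosed_topologicalClosure _).completeSpace_coe
def Pfull : L2 →L[ℂ] L2 := Hardy.subtypeL.comp (Hardy.orthogonalProjectionOnto)

open Classical in
/-- The element of `L²` determined by an essentially bounded symbol
(junk value `0` if the function is not essentially bounded). -/
def symbolL2 (g : 𝕋 → ℂ) : L2 :=
  if hg : MemLp g ⊤ μT then (hg.mono_exponent le_top).toLp g else 0

/-- `g ∈ H^∞`: `g` is essentially bounded and lies in the Hardy space. -/
def InHinf (g : 𝕋 → ℂ) : Prop := MemLp g ⊤ μT ∧ symbolL2 g ∈ Hardy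

theorem memMul {f : 𝕋 → ℂ} (hf : MemLp f ⊤ μT) (h : L2) :
    MemLp (fun x => f x * h x) 2 μT := by
  refine ⟨hf.aestronglyMeasurable.mul (Lp.aestronglyMeasurable h), ?_⟩
  refine lt_of_le_of_lt ((eLpNorm_le_eLpNorm_top_mul_eLpNorm 2 f (Lp.aestronglyMeasurable h)
    (· * ·) 1 (Filter.Eventually.of_forall fun x => by simp [nnnorm_mul])).trans_eq
    (by rw [ENNReal.coe_one, one_mul])) ?_
  exact ENNReal.mul_lt_top hf.2 (Lp.memLp h).2

open Classical in
/-- Multiplication by an `L^∞` symbol, as a bounded operator on `L²`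
(defined to be `0` for symbols that are not essentially bounded). -/
def mulCLM (f : 𝕋 → ℂ) : L2 →L[ℂ] L2 :=
  if hf : MemLp f ⊤ μT then
    LinearMap.mkContinuousOfExistsBound
      { toFun := fun h => (memMul hf h).toLp (fun x => f x * h x)
        map_add' := fun h k => by
          rw [← MemLp.toLp_add]
          apply MemLp.toLp_congr
          filter_upwards [AEEqFun.coeFn_add (h : 𝕋 →ₘ[μT] ℂ) (k : 𝕋 →ₘ[μT] ℂ)] with x hx
          simp only [show ((h + k : L2) : 𝕋 →ₘ[μT] ℂ) = (h : 𝕋 →ₘ[μT] ℂ) + (k : 𝕋 →ₘ[μT] ℂ)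
            from rfl, hx, Pi.add_apply]
          ring
        map_smul' := fun c h => by
          simp only [RingHom.id_apply]
          rw [← MemLp.toLp_const_smul]
          apply MemLp.toLp_congr
          filter_upwards [AEEqFun.coeFn_smul c (h : 𝕋 →ₘ[μT] ℂ)] with x hx
          simp only [show ((c • h : L2) : 𝕋 →ₘ[μT] ℂ) = c • (h : 𝕋 →ₘ[μT] ℂ) from rfl, hx,
            Pi.smul_apply, smul_eq_mul]
          ring }
      ⟨(eLpNorm f ⊤ μT).toReal, fun h => by
        simp only [LinearMap.coe_mk, AddHom.coe_mk]
        rw [Lp.norm_toLp, Lp.norm_def]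
        rw [← ENNReal.toReal_mul]
        refine ENNReal.toReal_mono ?_ ?_
        · exact ENNReal.mul_ne_top hf.2.ne (Lp.memLp h).2.ne
        · exact (eLpNorm_le_eLpNorm_top_mul_eLpNorm 2 f (Lp.aestronglyMeasurable h)
            (· * ·) 1 (Filter.Eventually.of_forall fun x => by simp [nnnorm_mul])).trans_eq
            (by rw [ENNReal.coe_one, one_mul])⟩
  else 0

theorem continuous_cw : Continuous cw := map_continuous (fourier 1)

theorem norm_cw (x : 𝕋) : ‖cw x‖ = 1 := by
  rw [cw, fourier_apply]
  exact Circle.norm_coe _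

theorem memVop (h : L2) : MemLp (fun x => conj (cw x) * conj (h x)) 2 μT := by
  refine MemLp.of_le_mul (c := 1) (Lp.memLp h)
    ((continuous_cw.star.aestronglyMeasurable).mul
      (continuous_star.comp_aestronglyMeasurable (Lp.aestronglyMeasurable h)))
    (Filter.Eventually.of_forall fun x => ?_)
  simp [norm_cw x]

/-- The antiunitary operator `V` on `L²(∂D)` given by `(V h)(w) = conj(w) ⬝ conj(h(w))`. -/
def Vop (h : L2) : L2 := (memVop h).toLp _

/-- The Toeplitz operator `T_f h = P (f h)` on `H²`. -/
def Toeplitz (f : 𝕋 → ℂ) : Hardy →L[ℂ] Hardy :=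
  (Hardy.orthogonalProjectionOnto).comp ((mulCLM f).comp Hardy.subtypeL)

/-- The Hankel operator `H_f h = (I − P)(f h)`, from `H²` into `L²` (with range in `L² ⊖ H²`). -/
def Hankel (f : 𝕋 → ℂ) : Hardy →L[ℂ] L2 :=
  (ContinuousLinearMap.id ℂ L2 - Pfull).comp ((mulCLM f).comp Hardy.subtypeL)

/-- The Möbius map `φ_z`, viewed as a function on the circle. -/
def phiC (z : ℂ) : 𝕋 → ℂ := fun x => (z - cw x) / (1 - conj z * cw x)

/-- The normalized reproducing kernel `k_z` as a function on the circle. -/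
def kfun (z : ℂ) : 𝕋 → ℂ := fun x => (Real.sqrt (1 - ‖z‖ ^ 2) : ℂ) / (1 - conj z * cw x)

/-- The normalized reproducing kernel `k_z` as an element of `L²`. -/
def kz (z : ℂ) : L2 := symbolL2 (kfun z)

/-- The normalized reproducing kernel `k_z` as an element of the Hardy space `H²`
(for `|z| < 1`, `k_z` lies in `H²`, so this is just `k_z`). -/
def kzH (z : ℂ) : Hardy := Hardy.orthogonalProjectionOnto (kz z)

/-- The antianalytic part `f₋ = (I − P) f` of a bounded symbol, as a function. -/
def minusPart (f : 𝕋 → ℂ) : 𝕋 → ℂ := (symbolL2 f - Pfull (symbolL2 f) : L2)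

/-- The harmonic (Poisson) extension of `h ∈ L¹(∂D)` at `z ∈ D`:
`h(z) = ∫ h(w) (1 − |z|²)/|1 − w z̄|² dσ(w)`. -/
def poisson (h : 𝕋 → ℂ) (z : ℂ) : ℂ :=
  ∫ x, h x * (((1 - ‖z‖ ^ 2) / ‖1 - cw x * conj z‖ ^ 2 : ℝ) : ℂ) ∂μT

/-- The Poisson extension of a real-valued function. -/
def poissonR (h : 𝕋 → ℝ) (z : ℂ) : ℝ :=
  ∫ x, h x * ((1 - ‖z‖ ^ 2) / ‖1 - cw x * conj z‖ ^ 2) ∂μT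

open Classical in
/-- The Möbius map `φ_z` viewed as a self-map of the circle `∂D` (for `|z| < 1`,
`φ_z` maps the circle to itself). -/
def phiT (z : ℂ) : 𝕋 → 𝕋 := fun x =>
  if h : ‖phiC z x‖ = 1 then
    AddCircle.homeomorphCircle'.symm ⟨phiC z x, mem_sphere_zero_iff_norm.2 h⟩
  else x

/-- `H²(ℂⁿ) = H² ⊕ ⋯ ⊕ H²`. -/
abbrev HardyN (n : ℕ) := PiLp 2 (fun _ : Fin n => Hardy)
/-- `L²(ℂⁿ) = L² ⊕ ⋯ ⊕ L²`. -/
abbrev L2N (n : ℕ) := PiLp 2 (fun _ : Fin n => L2)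

instance {n : ℕ} : CompleteSpace (HardyN n) :=
  inferInstanceAs (CompleteSpace (PiLp 2 fun _ : Fin n => Hardy))
instance {n : ℕ} : CompleteSpace (L2N n) :=
  inferInstanceAs (CompleteSpace (PiLp 2 fun _ : Fin n => L2))

/-- The operator `(Fin n × Fin n)`-matrix of operators acting on direct sums. -/
def matrixCLM {n : ℕ} {A B : Type*} [NormedAddCommGroup A] [NormedAddCommGroup B]
    [NormedSpace ℂ A] [NormedSpace ℂ B] (T : Fin n → Fin n → (A →L[ℂ] B)) :
    (PiLp 2 fun _ : Fin n => A) →L[ℂ] (PiLp 2 fun _ : Fin n => B) :=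
  ((PiLp.continuousLinearEquiv 2 ℂ (fun _ : Fin n => B)).symm.toContinuousLinearMap.comp
    (ContinuousLinearMap.pi fun i => ∑ j, (T i j).comp (ContinuousLinearMap.proj j))).comp
    (PiLp.continuousLinearEquiv 2 ℂ (fun _ : Fin n => A)).toContinuousLinearMap

/-- The block Toeplitz operator `T_F` on `H²(ℂⁿ)`, given by the operator matrix `(T_{f_ij})`. -/
def blockToeplitz {n : ℕ} (F : Fin n → Fin n → 𝕋 → ℂ) : HardyN n →L[ℂ] HardyN n :=
  matrixCLM fun i j => Toeplitz (F i j)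

/-- The block Hankel operator `H_F` from `H²(ℂⁿ)` to `L²(ℂⁿ)`, given by the
operator matrix `(H_{f_ij})`. -/
def blockHankel {n : ℕ} (F : Fin n → Fin n → 𝕋 → ℂ) : HardyN n →L[ℂ] L2N n :=
  matrixCLM fun i j => Hankel (F i j)

/-- Pointwise product of matrix symbols. -/
def symMul {n : ℕ} (F G : Fin n → Fin n → 𝕋 → ℂ) : Fin n → Fin n → 𝕋 → ℂ :=
  fun i j x => ∑ k, F i k x * G k j x

/-- Pointwise conjugate transpose `F*` of a matrix symbol. -/
def symStar {n : ℕ} (F : Fin n → Fin n → 𝕋 → ℂ) : Fin n → Fin n → 𝕋 → ℂ :=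
  fun i j x => conj (F j i x)

/-- The rank-one operator `x ⊗ y` given by `(x ⊗ y) f = ⟨f, y⟩ x`, where the inner
product `⟨·,·⟩` is linear in the first argument. -/
def rankOne {E F : Type*} [NormedAddCommGroup E] [InnerProductSpace ℂ E]
    [NormedAddCommGroup F] [InnerProductSpace ℂ F] (x : F) (y : E) : E →L[ℂ] F :=
  (innerSL ℂ y).smulRight x

/-! ### Auxiliary development -/

open MeasureTheory

set_option maxHeartbeats 1000000

lemma inner_L2 (a b : L2) : ⟪a, b⟫_ℂ = ∫ x, conj (a x) * b x ∂μT := by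
  rw [MeasureTheory.L2.inner_def]
  simp only [RCLike.inner_apply']

lemma coeFn_symbolL2 {g : 𝕋 → ℂ} (hg : MemLp g ⊤ μT) : (symbolL2 g : 𝕋 → ℂ) =ᵐ[μT] g := by
  rw [symbolL2, dif_pos hg]; exact MemLp.coeFn_toLp _

lemma coeFn_mulCLM {f : 𝕋 → ℂ} (hf : MemLp f ⊤ μT) (h : L2) :
    (mulCLM f h : 𝕋 → ℂ) =ᵐ[μT] fun x => f x * h x := by
  rw [mulCLM, dif_pos hf]
  rw [LinearMap.mkContinuousOfExistsBound_apply]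
  exact MemLp.coeFn_toLp (memMul hf h)

lemma coeFn_Vop (h : L2) : (Vop h : 𝕋 → ℂ) =ᵐ[μT] fun x => conj (cw x) * conj (h x) :=
  MemLp.coeFn_toLp _

lemma conj_cw_mul_cw (x : 𝕋) : conj (cw x) * cw x = 1 := by
  rw [mul_comm, Complex.mul_conj', norm_cw]
  norm_num

lemma cw_pow (j : ℕ) (x : 𝕋) : cw x ^ j = fourier (j : ℤ) x := by
  induction j with
  | zero => simp [fourier_zero]
  | succ n ih =>
    have h2 : ((n + 1 : ℕ) : ℤ) = (n : ℤ) + 1 := by push_cast; ring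
    rw [pow_succ, ih, h2, fourier_add]
    rfl

lemma conj_fourier (n : ℤ) (x : 𝕋) : conj (fourier n x) = fourier (-n) x := fourier_neg.symm

lemma integrable_of_bound (f : 𝕋 → ℂ) (hm : AEStronglyMeasurable f μT) (C : ℝ)
    (hb : ∀ᵐ x ∂μT, ‖f x‖ ≤ C) : Integrable f μT := by
  have h := memLp_top_of_bound hm C hb
  exact memLp_one_iff_integrable.mp (h.mono_exponent le_top)

lemma integrable_continuous (f : 𝕋 → ℂ) (hf : Continuous f) : Integrable f μT := by
  have : IsCompact (Set.univ : Set 𝕋) := isCompact_univ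
  obtain ⟨C, hC⟩ := (this.image (hf.norm)).bddAbove
  refine integrable_of_bound f hf.aestronglyMeasurable C ?_
  filter_upwards with x
  exact hC ⟨x, Set.mem_univ x, rfl⟩

lemma integral_fourier_eq (n : ℤ) :
    ∫ x, fourier n x ∂μT = if n = 0 then 1 else 0 := by
  split_ifs with h
  · subst h
    simp only [fourier_zero]
    simp
  · have h0 : ⟪(fourierLp 2 0 : L2), (fourierLp 2 n : L2)⟫_ℂ = 0 :=
      orthonormal_fourier.2 (show (0:ℤ) ≠ n from Ne.symm h)
    rw [inner_L2] at h0
    rw [← h0]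
    refine integral_congr_ae ?_
    filter_upwards [coeFn_fourierLp (T := 2 * Real.pi) 2 0, coeFn_fourierLp (T := 2 * Real.pi) 2 n]
      with x h1 h2
    rw [h1, h2, fourier_zero]
    simp

/-! ### Möbius and kernel symbols -/

lemma norm_conj_z_cw (z : ℂ) (x : 𝕋) : ‖conj z * cw x‖ = ‖z‖ := by
  rw [norm_mul, norm_cw, RCLike.norm_conj, mul_one]

lemma denom_norm_ge {z : ℂ} (hz : ‖z‖ < 1) (x : 𝕋) : 1 - ‖z‖ ≤ ‖1 - conj z * cw x‖ := by
  calc 1 - ‖z‖ = ‖(1:ℂ)‖ - ‖conj z * cw x‖ := by rw [norm_one, norm_conj_z_cw]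
  _ ≤ ‖1 - conj z * cw x‖ := norm_sub_norm_le _ _

lemma denom_ne_zero {z : ℂ} (hz : ‖z‖ < 1) (x : 𝕋) : (1 - conj z * cw x) ≠ 0 := by
  intro h
  have h1 := denom_norm_ge hz x
  rw [h] at h1
  simp only [norm_zero] at h1
  linarith

lemma continuous_denom (z : ℂ) : Continuous (fun x => 1 - conj z * cw x) :=
  continuous_const.sub (continuous_const.mul continuous_cw)

lemma continuous_phiC {z : ℂ} (hz : ‖z‖ < 1) : Continuous (phiC z) :=
  Continuous.div (continuous_const.sub continuous_cw) (continuous_denom z)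
    fun x => denom_ne_zero hz x

lemma continuous_kfun {z : ℂ} (hz : ‖z‖ < 1) : Continuous (kfun z) :=
  Continuous.div continuous_const (continuous_denom z) fun x => denom_ne_zero hz x

lemma denom_eq (z : ℂ) (x : 𝕋) : 1 - conj z * cw x = cw x * (conj (cw x) - conj z) := by
  have h := conj_cw_mul_cw x
  rw [mul_sub]
  rw [mul_comm (cw x) (conj (cw x)), h]
  ring

lemma norm_denom_eq {z : ℂ} (x : 𝕋) : ‖1 - conj z * cw x‖ = ‖z - cw x‖ := by
  rw [denom_eq, norm_mul, norm_cw, one_mul, ← map_sub]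
  rw [RCLike.norm_conj, norm_sub_rev]

lemma norm_phiC {z : ℂ} (hz : ‖z‖ < 1) (x : 𝕋) : ‖phiC z x‖ = 1 := by
  have hne : z - cw x ≠ 0 := by
    intro h
    have : z = cw x := by linear_combination h
    rw [this, norm_cw] at hz
    exact lt_irrefl _ hz
  rw [phiC, norm_div, norm_denom_eq, div_self (norm_ne_zero_iff.mpr hne)]

lemma memLinf_phiC {z : ℂ} (hz : ‖z‖ < 1) : MemLp (phiC z) ⊤ μT :=
  memLp_top_of_bound (continuous_phiC hz).aestronglyMeasurable 1
    (Filter.Eventually.of_forall fun x => (norm_phiC hz x).le)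

lemma norm_kfun_le {z : ℂ} (hz : ‖z‖ < 1) (x : 𝕋) :
    ‖kfun z x‖ ≤ Real.sqrt (1 - ‖z‖ ^ 2) / (1 - ‖z‖) := by
  rw [kfun, norm_div]
  have h1 : ‖((Real.sqrt (1 - ‖z‖ ^ 2) : ℝ) : ℂ)‖ = Real.sqrt (1 - ‖z‖ ^ 2) := by
    rw [Complex.norm_real, Real.norm_eq_abs, _root_.abs_of_nonneg (Real.sqrt_nonneg _)]
  rw [h1]
  exact div_le_div_of_nonneg_left (Real.sqrt_nonneg _) (by linarith) (denom_norm_ge hz x)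

lemma memLinf_kfun {z : ℂ} (hz : ‖z‖ < 1) : MemLp (kfun z) ⊤ μT :=
  memLp_top_of_bound (continuous_kfun hz).aestronglyMeasurable _
    (Filter.Eventually.of_forall fun x => norm_kfun_le hz x)

lemma coeFn_kz {z : ℂ} (hz : ‖z‖ < 1) : (kz z : 𝕋 → ℂ) =ᵐ[μT] kfun z :=
  coeFn_symbolL2 (memLinf_kfun hz)

/-! ### The geometric series helper -/

lemma hasSum_geom_integral {z : ℂ} (hz : ‖z‖ < 1) (G : 𝕋 → ℂ) (hG : Continuous G) (C : ℝ)
    (hC : ∀ x, ‖G x‖ ≤ C) :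
    HasSum (fun j : ℕ => (conj z) ^ j * ∫ x, G x * cw x ^ j ∂μT)
      (∫ x, G x / (1 - conj z * cw x) ∂μT) := by
  have hC0 : 0 ≤ C := le_trans (norm_nonneg _) (hC 0)
  have hcz : ‖conj z‖ = ‖z‖ := RCLike.norm_conj z
  have hint : ∀ j : ℕ, Integrable (fun x => G x * cw x ^ j) μT := fun j =>
    integrable_continuous _ (hG.mul ((continuous_cw).pow j))
  have hnorm : ∀ j : ℕ, ‖(conj z) ^ j * ∫ x, G x * cw x ^ j ∂μT‖ ≤ C * ‖z‖ ^ j := by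
    intro j
    rw [norm_mul, norm_pow, hcz]
    have h2 : ‖∫ x, G x * cw x ^ j ∂μT‖ ≤ C := by
      have := norm_integral_le_of_norm_le_const (μ := μT)
        (f := fun x => G x * cw x ^ j) (C := C) ?_
      · simpa using this
      · filter_upwards with x
        rw [norm_mul, norm_pow, norm_cw, one_pow, mul_one]
        exact hC x
    calc ‖z‖ ^ j * ‖∫ x, G x * cw x ^ j ∂μT‖ ≤ ‖z‖ ^ j * C := by
          exact mul_le_mul_of_nonneg_left h2 (pow_nonneg (norm_nonneg z) j)
      _ = C * ‖z‖ ^ j := mul_comm _ _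
  have hsum : Summable fun j : ℕ => ‖(conj z) ^ j * ∫ x, G x * cw x ^ j ∂μT‖ :=
    Summable.of_nonneg_of_le (fun j => norm_nonneg _) hnorm
      ((summable_geometric_of_lt_one (norm_nonneg z) hz).mul_left C)
  rw [hasSum_iff_tendsto_nat_of_summable_norm hsum]
  have htarget : Integrable (fun x => G x / (1 - conj z * cw x)) μT :=
    integrable_continuous _ (hG.div (continuous_denom z) (denom_ne_zero hz))
  have key : ∀ N : ℕ, (∑ j ∈ Finset.range N, (conj z) ^ j * ∫ x, G x * cw x ^ j ∂μT)
      - (∫ x, G x / (1 - conj z * cw x) ∂μT)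
      = - ∫ x, G x * (conj z * cw x) ^ N / (1 - conj z * cw x) ∂μT := by
    intro N
    have h1 : ∀ j : ℕ, (conj z) ^ j * ∫ x, G x * cw x ^ j ∂μT
        = ∫ x, G x * (conj z * cw x) ^ j ∂μT := by
      intro j
      rw [← integral_const_mul]
      congr 1
      funext x
      ring
    simp_rw [h1]
    rw [← integral_finset_sum _ (fun j _ => by
      have : Integrable (fun x => (conj z) ^ j * (G x * cw x ^ j)) μT :=
        (hint j).const_mul _
      refine this.congr ?_
      filter_upwards with x
      ring)]
    have hintN : Integrable (fun x => G x * (conj z * cw x) ^ N / (1 - conj z * cw x)) μT :=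
      integrable_continuous _ (Continuous.div (hG.mul ((continuous_const.mul continuous_cw).pow N)) (continuous_denom z) (denom_ne_zero hz))
    rw [← integral_sub (integrable_finset_sum _ (fun j _ => by
      have : Integrable (fun x => (conj z) ^ j * (G x * cw x ^ j)) μT :=
        (hint j).const_mul _
      refine this.congr ?_
      filter_upwards with x
      ring)) htarget, ← integral_neg]
    refine integral_congr_ae (Filter.Eventually.of_forall fun x => ?_)
    dsimp only
    have hne := denom_ne_zero hz x
    have hgeo : ∑ j ∈ Finset.range N, (conj z * cw x) ^ j
        = ((conj z * cw x) ^ N - 1) / (conj z * cw x - 1) := by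
      apply geom_sum_eq
      intro h
      have : ‖conj z * cw x‖ = 1 := by rw [h, norm_one]
      rw [norm_conj_z_cw] at this
      rw [this] at hz
      exact lt_irrefl _ hz
    have hsplit : ∑ j ∈ Finset.range N, G x * (conj z * cw x) ^ j
        = G x * ∑ j ∈ Finset.range N, (conj z * cw x) ^ j := by
      rw [Finset.mul_sum]
    have ha : (starRingEnd ℂ) z * cw x - 1 ≠ 0 := fun h => hne (by linear_combination -h)
    rw [hsplit, hgeo]
    field_simp
    ring
  have hbound : ∀ N : ℕ, ‖(∑ j ∈ Finset.range N, (conj z) ^ j * ∫ x, G x * cw x ^ j ∂μT)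
      - (∫ x, G x / (1 - conj z * cw x) ∂μT)‖ ≤ C * ‖z‖ ^ N / (1 - ‖z‖) := by
    intro N
    rw [key N, norm_neg]
    have := norm_integral_le_of_norm_le_const (μ := μT)
      (f := fun x => G x * (conj z * cw x) ^ N / (1 - conj z * cw x))
      (C := C * ‖z‖ ^ N / (1 - ‖z‖)) ?_
    · simpa using this
    · filter_upwards with x
      rw [norm_div, norm_mul, norm_pow, norm_conj_z_cw]
      have h2 : 1 - ‖z‖ ≤ ‖1 - conj z * cw x‖ := denom_norm_ge hz x
      have h3 : 0 < 1 - ‖z‖ := by linarith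
      apply div_le_div₀ (by positivity) ?_ h3 h2
      exact mul_le_mul_of_nonneg_right (hC x) (pow_nonneg (norm_nonneg z) N)
  rw [← tendsto_sub_nhds_zero_iff]
  refine squeeze_zero_norm hbound ?_
  have : Filter.Tendsto (fun N : ℕ => C * ‖z‖ ^ N / (1 - ‖z‖)) Filter.atTop (nhds (C * 0 / (1 - ‖z‖))) := by
    apply Filter.Tendsto.div_const
    exact (tendsto_pow_atTop_nhds_zero_of_lt_one (norm_nonneg z) hz).const_mul C
  simpa using this

/-! ### Hardy space structure -/

lemma continuous_inner_right (e : L2) : Continuous fun u : L2 => ⟪u, e⟫_ℂ :=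
  continuous_inner.comp (continuous_id.prodMk continuous_const)

lemma inner_eL (m n : ℤ) : ⟪(fourierLp 2 m : L2), (fourierLp 2 n : L2)⟫_ℂ
    = if m = n then 1 else 0 := by
  split_ifs with h
  · subst h
    have h1 := orthonormal_fourier (T := 2 * Real.pi).1 m
    rw [@inner_self_eq_norm_sq_to_K ℂ] at *
    rw [h1]
    norm_num
  · exact orthonormal_fourier.2 h

lemma closure_span_induction {ι : Type*} (v : ι → L2) (W : Set L2)
    (h0 : (0:L2) ∈ W) (hadd : ∀ x ∈ W, ∀ y ∈ W, x + y ∈ W)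
    (hsmul : ∀ (c : ℂ), ∀ x ∈ W, c • x ∈ W) (hclosed : IsClosed W)
    (hv : ∀ i, v i ∈ W) :
    ∀ x ∈ (Submodule.span ℂ (Set.range v)).topologicalClosure, x ∈ W := by
  intro x hx
  let Wsub : Submodule ℂ L2 :=
    { carrier := W
      add_mem' := fun ha hb => hadd _ ha _ hb
      zero_mem' := h0
      smul_mem' := fun c x hx => hsmul c x hx }
  have h1 : Submodule.span ℂ (Set.range v) ≤ Wsub :=
    Submodule.span_le.mpr (Set.range_subset_iff.mpr hv)
  have h2 : IsClosed (Wsub : Set L2) := hclosed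
  exact Submodule.topologicalClosure_minimal _ h1 h2 hx

lemma hardy_induction (W : Set L2) (h0 : (0:L2) ∈ W) (hadd : ∀ x ∈ W, ∀ y ∈ W, x + y ∈ W)
    (hsmul : ∀ (c : ℂ), ∀ x ∈ W, c • x ∈ W) (hclosed : IsClosed W)
    (hbasis : ∀ n : ℕ, (fourierLp 2 (n:ℤ) : L2) ∈ W) : ∀ x ∈ Hardy, x ∈ W :=
  closure_span_induction _ W h0 hadd hsmul hclosed hbasis

lemma eL_mem_Hardy (n : ℕ) : (fourierLp 2 (n:ℤ) : L2) ∈ Hardy :=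
  Submodule.le_topologicalClosure _ (Submodule.subset_span ⟨n, rfl⟩)

lemma eL_mem_orth {n : ℤ} (hn : n < 0) : (fourierLp 2 n : L2) ∈ Hardyᗮ := by
  rw [Submodule.mem_orthogonal]
  intro u hu
  refine hardy_induction {u | ⟪u, (fourierLp 2 n : L2)⟫_ℂ = 0} (by simp) ?_ ?_ ?_ ?_ u hu
  · intro a ha b hb
    simp only [Set.mem_setOf_eq] at *
    rw [inner_add_left, ha, hb, add_zero]
  · intro c a ha
    simp only [Set.mem_setOf_eq] at *
    rw [inner_smul_left, ha, mul_zero]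
  · exact isClosed_eq (continuous_inner_right _) continuous_const
  · intro m
    simp only [Set.mem_setOf_eq]
    rw [inner_eL, if_neg]
    omega

lemma eq_zero_of_forall_inner_eL (x : L2) (hx : ∀ n : ℤ, ⟪(fourierLp 2 n : L2), x⟫_ℂ = 0) :
    x = 0 := by
  have h1 : ∀ i, fourierBasis.repr x i = 0 := fun i => by
    rw [fourierBasis.repr_apply_apply, coe_fourierBasis]; exact hx i
  have h3 := fourierBasis.hasSum_repr x
  have h4 : (fun i => fourierBasis.repr x i • (fourierBasis (T := 2 * Real.pi)) i)
      = fun _ => (0 : L2) := funext fun i => by rw [h1 i, zero_smul]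
  rw [h4] at h3
  exact h3.unique hasSum_zero

lemma Pfull_apply (x : L2) : Pfull x = ↑(Hardy.orthogonalProjectionOnto x) := rfl

lemma sub_Pfull_mem_orth (x : L2) : x - Pfull x ∈ Hardyᗮ :=
  Submodule.sub_starProjection_mem_orthogonal (K := Hardy) x

lemma inner_zero_of_mem_orth {x y : L2} (hx : x ∈ Hardy) (hy : y ∈ Hardyᗮ) :
    ⟪x, y⟫_ℂ = 0 := (Submodule.mem_orthogonal _ _).mp hy x hx

lemma inner_zero_of_mem_orth' {x y : L2} (hx : x ∈ Hardyᗮ) (hy : y ∈ Hardy) :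
    ⟪x, y⟫_ℂ = 0 := by
  rw [← inner_conj_symm, inner_zero_of_mem_orth hy hx, map_zero]

lemma mem_Hardy_iff {x : L2} :
    x ∈ Hardy ↔ ∀ n : ℤ, n < 0 → ⟪(fourierLp 2 n : L2), x⟫_ℂ = 0 := by
  constructor
  · intro hx n hn
    exact inner_zero_of_mem_orth' (eL_mem_orth hn) hx
  · intro hco
    have hy : x - Pfull x ∈ Hardyᗮ := sub_Pfull_mem_orth x
    have hzero : x - Pfull x = 0 := by
      apply eq_zero_of_forall_inner_eL
      intro n
      rcases lt_or_ge n 0 with hn | hn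
      · rw [inner_sub_right, hco n hn, inner_zero_of_mem_orth' (eL_mem_orth hn)
          (by rw [Pfull_apply]; exact Submodule.coe_mem _), sub_zero]
      · obtain ⟨m, rfl⟩ := Int.eq_ofNat_of_zero_le hn
        exact inner_zero_of_mem_orth (eL_mem_Hardy m) hy
    have : x = Pfull x := by rwa [sub_eq_zero] at hzero
    rw [this, Pfull_apply]
    exact Submodule.coe_mem _

lemma mem_orth_iff {x : L2} :
    x ∈ Hardyᗮ ↔ ∀ n : ℕ, ⟪(fourierLp 2 (n:ℤ) : L2), x⟫_ℂ = 0 := by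
  constructor
  · intro hx n
    exact inner_zero_of_mem_orth (eL_mem_Hardy n) hx
  · intro hco
    rw [Submodule.mem_orthogonal]
    intro u hu
    refine hardy_induction {u | ⟪u, x⟫_ℂ = 0} (by simp) ?_ ?_ ?_ ?_ u hu
    · intro a ha b hb
      simp only [Set.mem_setOf_eq] at *
      rw [inner_add_left, ha, hb, add_zero]
    · intro c a ha
      simp only [Set.mem_setOf_eq] at *
      rw [inner_smul_left, ha, mul_zero]
    · exact isClosed_eq (continuous_inner_right _) continuous_const
    · exact hco

/-- The conjugate Hardy space: closure of span of negative Fourier modes. -/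
def Hardy2 : Submodule ℂ L2 :=
  (Submodule.span ℂ (Set.range fun m : ℕ => (fourierLp 2 (-1 - m) : L2))).topologicalClosure

instance : CompleteSpace Hardy2 :=
  (Submodule.isClosed_topologicalClosure _).completeSpace_coe

lemma Hardy2_le_orth : Hardy2 ≤ Hardyᗮ := by
  refine Submodule.topologicalClosure_minimal _ ?_ (Submodule.isClosed_orthogonal _)
  refine Submodule.span_le.mpr (Set.range_subset_iff.mpr fun m => ?_)
  exact eL_mem_orth (by omega)

lemma orth_le_Hardy2 : Hardyᗮ ≤ Hardy2 := by
  intro y hy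
  set q := Hardy2.orthogonalProjectionOnto y with hq
  have hyq : y - ↑q ∈ Hardy2ᗮ := Submodule.sub_starProjection_mem_orthogonal (K := Hardy2) y
  have hzero : y - ↑q = 0 := by
    apply eq_zero_of_forall_inner_eL
    intro n
    rcases lt_or_ge n 0 with hn | hn
    · have hmem : (fourierLp 2 n : L2) ∈ Hardy2 := by
        apply Submodule.le_topologicalClosure
        apply Submodule.subset_span
        exact ⟨(-1 - n).toNat, congrArg (fun k : ℤ => (fourierLp 2 k : L2)) (by omega)⟩
      exact (Submodule.mem_orthogonal _ _).mp hyq _ hmem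
    · obtain ⟨m, rfl⟩ := Int.eq_ofNat_of_zero_le hn
      rw [inner_sub_right]
      have h1 : ⟪(fourierLp 2 (m:ℤ) : L2), y⟫_ℂ = 0 :=
        inner_zero_of_mem_orth (eL_mem_Hardy m) hy
      have h2 : ⟪(fourierLp 2 (m:ℤ) : L2), (q : L2)⟫_ℂ = 0 :=
        inner_zero_of_mem_orth (eL_mem_Hardy m) (Hardy2_le_orth (Submodule.coe_mem q))
      rw [h1, h2, sub_zero]
  have : y = ↑q := by rwa [sub_eq_zero] at hzero
  rw [this]
  exact Submodule.coe_mem q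

lemma orth_induction (W : Set L2) (h0 : (0:L2) ∈ W) (hadd : ∀ x ∈ W, ∀ y ∈ W, x + y ∈ W)
    (hsmul : ∀ (c : ℂ), ∀ x ∈ W, c • x ∈ W) (hclosed : IsClosed W)
    (hbasis : ∀ m : ℕ, (fourierLp 2 (-1 - m) : L2) ∈ W) : ∀ x ∈ Hardyᗮ, x ∈ W :=
  fun x hx => closure_span_induction _ W h0 hadd hsmul hclosed hbasis x (orth_le_Hardy2 hx)

/-! ### Coefficient computations -/

lemma norm_fourier_one (n : ℤ) (t : 𝕋) : ‖fourier n t‖ = 1 := by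
  exact Circle.norm_coe _

lemma inner_eL_eq (n : ℤ) (x : L2) :
    ⟪(fourierLp 2 n : L2), x⟫_ℂ = ∫ t, fourier (-n) t * x t ∂μT := by
  rw [inner_L2]
  refine integral_congr_ae ?_
  filter_upwards [coeFn_fourierLp (T := 2 * Real.pi) 2 n] with t ht
  rw [ht, conj_fourier]

lemma Vop_eL (n : ℤ) : Vop (fourierLp 2 n : L2) = (fourierLp 2 (-1 - n) : L2) := by
  apply MeasureTheory.Lp.ext
  have h1 := coeFn_Vop (fourierLp 2 n : L2)
  filter_upwards [h1, coeFn_fourierLp (T := 2 * Real.pi) 2 n,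
    coeFn_fourierLp (T := 2 * Real.pi) 2 (-1 - n)] with t h2 h3 h4
  rw [h2, h4]
  simp only [h3]
  rw [show cw t = fourier 1 t from rfl, conj_fourier, conj_fourier,
    show (-1 - n : ℤ) = -1 + -n by ring, fourier_add]

lemma integral_fourier_phiC {z : ℂ} (hz : ‖z‖ < 1) (a : ℤ) :
    ∫ t, fourier a t * phiC z t ∂μT
      = (if a ≤ 0 then z * (conj z) ^ (-a).toNat else 0)
        - (if a ≤ -1 then (conj z) ^ (-a - 1).toNat else 0) := by
  have hG : Continuous fun t => fourier a t * (z - cw t) :=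
    (map_continuous (fourier a)).mul (continuous_const.sub continuous_cw)
  have hb : ∀ t, ‖fourier a t * (z - cw t)‖ ≤ ‖z‖ + 1 := fun t => by
    rw [norm_mul, norm_fourier_one, one_mul]
    calc ‖z - cw t‖ ≤ ‖z‖ + ‖cw t‖ := norm_sub_le _ _
      _ = ‖z‖ + 1 := by rw [norm_cw]
  have h2 := hasSum_geom_integral hz _ hG (‖z‖ + 1) hb
  have heq : ∫ t, (fun t => fourier a t * (z - cw t)) t / (1 - conj z * cw t) ∂μT
      = ∫ t, fourier a t * phiC z t ∂μT := by
    refine integral_congr_ae (Filter.Eventually.of_forall fun t => ?_)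
    simp only [phiC]
    rw [mul_div_assoc]
  rw [heq] at h2
  have h3 : ∀ j : ℕ, (conj z) ^ j * ∫ t, (fun t => fourier a t * (z - cw t)) t * cw t ^ j ∂μT
      = (if a + j = 0 then z * (conj z) ^ j else 0)
        - (if a + j + 1 = 0 then (conj z) ^ j else 0) := by
    intro j
    have hpt : ∀ t : 𝕋, (fourier a t * (z - cw t)) * cw t ^ j
        = z * fourier (a + j) t - fourier (a + j + 1) t := by
      intro t
      rw [cw_pow]
      rw [show (a + j + 1 : ℤ) = (a + j) + 1 by ring]
      rw [fourier_add (m := a + (j:ℤ)) (n := 1), fourier_add (m := a) (n := (j:ℤ))]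
      rw [show cw t = fourier 1 t from rfl]
      ring
    simp_rw [hpt]
    rw [integral_sub ((integrable_continuous _ (map_continuous (fourier (a + j)))).const_mul z)
      (integrable_continuous _ (map_continuous (fourier (a + j + 1))))]
    rw [integral_const_mul, integral_fourier_eq, integral_fourier_eq]
    by_cases h4 : a + j = 0
    · rw [if_pos h4, if_pos h4, if_neg (by omega)]
      by_cases h5 : a + j + 1 = 0
      · omega
      · rw [if_neg h5]
        ring
    · rw [if_neg h4, if_neg h4]
      by_cases h5 : a + j + 1 = 0
      · rw [if_pos h5, if_pos h5]
        ring
      · rw [if_neg h5, if_neg h5]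
        ring
  simp_rw [h3] at h2
  -- now identify the sum
  have hA : HasSum (fun j : ℕ => if a + j = 0 then z * (conj z) ^ j else 0)
      (if a ≤ 0 then z * (conj z) ^ (-a).toNat else 0) := by
    by_cases ha : a ≤ 0
    · rw [if_pos ha]
      have : (fun j : ℕ => if a + j = 0 then z * (conj z) ^ j else 0)
          = fun j : ℕ => if j = (-a).toNat then z * (conj z) ^ (-a).toNat else 0 := by
        funext j
        by_cases hj : a + j = 0
        · rw [if_pos hj, if_pos (by omega)]
          congr 2
          omega
        · rw [if_neg hj, if_neg (by omega)]
      rw [this]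
      exact hasSum_ite_eq _ _
    · rw [if_neg ha]
      have : (fun j : ℕ => if a + j = 0 then z * (conj z) ^ j else 0) = fun _ => (0:ℂ) := by
        funext j
        rw [if_neg (by omega)]
      rw [this]
      exact hasSum_zero
  have hB : HasSum (fun j : ℕ => if a + j + 1 = 0 then (conj z) ^ j else 0)
      (if a ≤ -1 then (conj z) ^ (-a - 1).toNat else 0) := by
    by_cases ha : a ≤ -1
    · rw [if_pos ha]
      have : (fun j : ℕ => if a + j + 1 = 0 then (conj z) ^ j else 0)
          = fun j : ℕ => if j = (-a - 1).toNat then (conj z) ^ (-a - 1).toNat else 0 := by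
        funext j
        by_cases hj : a + j + 1 = 0
        · rw [if_pos hj, if_pos (by omega)]
          congr 1
          omega
        · rw [if_neg hj, if_neg (by omega)]
      rw [this]
      exact hasSum_ite_eq _ _
    · rw [if_neg ha]
      have : (fun j : ℕ => if a + j + 1 = 0 then (conj z) ^ j else 0) = fun _ => (0:ℂ) := by
        funext j
        rw [if_neg (by omega)]
      rw [this]
      exact hasSum_zero
  exact h2.unique (hA.sub hB)

lemma inner_eL_mulCLM_phiC {z : ℂ} (hz : ‖z‖ < 1) (a b : ℤ) :
    ⟪(fourierLp 2 a : L2), mulCLM (phiC z) (fourierLp 2 b : L2)⟫_ℂ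
      = ∫ t, fourier (b - a) t * phiC z t ∂μT := by
  rw [inner_L2]
  refine integral_congr_ae ?_
  filter_upwards [coeFn_fourierLp (T := 2 * Real.pi) 2 a,
    coeFn_mulCLM (memLinf_phiC hz) (fourierLp 2 b : L2),
    coeFn_fourierLp (T := 2 * Real.pi) 2 b] with t h1 h2 h3
  rw [h1, h2, h3, conj_fourier, show (b - a : ℤ) = -a + b by ring, fourier_add]
  ring

lemma inner_eL_symbol_phiC {z : ℂ} (hz : ‖z‖ < 1) (a : ℤ) :
    ⟪(fourierLp 2 a : L2), symbolL2 (phiC z)⟫_ℂ = ∫ t, fourier (-a) t * phiC z t ∂μT := by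
  rw [inner_L2]
  refine integral_congr_ae ?_
  filter_upwards [coeFn_fourierLp (T := 2 * Real.pi) 2 a,
    coeFn_symbolL2 (memLinf_phiC hz)] with t h1 h2
  rw [h1, h2, conj_fourier]

lemma phiC_mem_Hardy {z : ℂ} (hz : ‖z‖ < 1) : symbolL2 (phiC z) ∈ Hardy := by
  rw [mem_Hardy_iff]
  intro n hn
  rw [inner_eL_symbol_phiC hz, integral_fourier_phiC hz]
  rw [if_neg (by omega), if_neg (by omega), sub_zero]

lemma mulCLM_phiC_mem_Hardy {z : ℂ} (hz : ‖z‖ < 1) {x : L2} (hx : x ∈ Hardy) :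
    mulCLM (phiC z) x ∈ Hardy := by
  revert x
  suffices h : ∀ x ∈ Hardy, x ∈ {x : L2 | mulCLM (phiC z) x ∈ Hardy} by
    exact fun x hx => h x hx
  refine hardy_induction _ (by simp only [Set.mem_setOf_eq, map_zero]; exact Submodule.zero_mem _)
    ?_ ?_ ?_ ?_
  · intro x hx y hy
    simp only [Set.mem_setOf_eq, map_add] at *
    exact Submodule.add_mem _ hx hy
  · intro c x hx
    simp only [Set.mem_setOf_eq, _root_.map_smul] at *
    exact Submodule.smul_mem _ c hx
  · have : Continuous (mulCLM (phiC z)) := (mulCLM (phiC z)).continuous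
    exact IsClosed.preimage this (Submodule.isClosed_topologicalClosure _)
  · intro b
    simp only [Set.mem_setOf_eq]
    rw [mem_Hardy_iff]
    intro n hn
    rw [inner_eL_mulCLM_phiC hz, integral_fourier_phiC hz]
    rw [if_neg (by omega), if_neg (by omega), sub_zero]

/-! ### The reproducing kernel -/

lemma inner_eL_kz {z : ℂ} (hz : ‖z‖ < 1) (n : ℤ) :
    ⟪(fourierLp 2 n : L2), kz z⟫_ℂ
      = if 0 ≤ n then ((Real.sqrt (1 - ‖z‖ ^ 2) : ℝ) : ℂ) * (conj z) ^ n.toNat else 0 := by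
  set c : ℂ := ((Real.sqrt (1 - ‖z‖ ^ 2) : ℝ) : ℂ) with hc
  have h1 : ⟪(fourierLp 2 n : L2), kz z⟫_ℂ
      = ∫ t, (fun t => c * fourier (-n) t) t / (1 - conj z * cw t) ∂μT := by
    rw [inner_L2]
    refine integral_congr_ae ?_
    filter_upwards [coeFn_fourierLp (T := 2 * Real.pi) 2 n, coeFn_kz hz] with t h2 h3
    rw [h2, h3, conj_fourier]
    show fourier (-n) t * kfun z t = c * fourier (-n) t / (1 - conj z * cw t)
    have hk : kfun z t = c / (1 - conj z * cw t) := rfl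
    rw [hk]
    ring
  have hcont : Continuous fun t : 𝕋 => c * fourier (-n) t :=
    continuous_const.mul (map_continuous (fourier (-n)))
  have hb : ∀ t : 𝕋, ‖c * fourier (-n) t‖ ≤ ‖c‖ := fun t => by
    rw [norm_mul, norm_fourier_one, mul_one]
  have h2 := hasSum_geom_integral hz _ hcont ‖c‖ hb
  rw [← h1] at h2
  have h3 : ∀ j : ℕ, (conj z) ^ j * ∫ t, (fun t => c * fourier (-n) t) t * cw t ^ j ∂μT
      = if (j:ℤ) = n then c * (conj z) ^ j else 0 := by
    intro j
    have hpt : ∀ t : 𝕋, (c * fourier (-n) t) * cw t ^ j = c * fourier ((j:ℤ) - n) t := by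
      intro t
      rw [cw_pow, show ((j:ℤ) - n : ℤ) = -n + (j:ℤ) by ring, fourier_add]
      ring
    simp_rw [hpt]
    rw [integral_const_mul, integral_fourier_eq]
    by_cases h4 : (j:ℤ) - n = 0
    · rw [if_pos h4, if_pos (by omega)]
      ring
    · rw [if_neg h4, if_neg (by omega)]
      ring
  simp_rw [h3] at h2
  by_cases hn : 0 ≤ n
  · rw [if_pos hn]
    have heq : (fun j : ℕ => if (j:ℤ) = n then c * (conj z) ^ j else 0)
        = fun j : ℕ => if j = n.toNat then c * (conj z) ^ n.toNat else 0 := by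
      funext j
      by_cases hj : (j:ℤ) = n
      · rw [if_pos hj, if_pos (by omega)]
        congr 2
        omega
      · rw [if_neg hj, if_neg (by omega)]
    rw [heq] at h2
    exact h2.unique (hasSum_ite_eq _ _)
  · rw [if_neg hn]
    have heq : (fun j : ℕ => if (j:ℤ) = n then c * (conj z) ^ j else 0) = fun _ => (0:ℂ) := by
      funext j
      rw [if_neg (by omega)]
    rw [heq] at h2
    exact h2.unique hasSum_zero

lemma kz_mem_Hardy {z : ℂ} (hz : ‖z‖ < 1) : kz z ∈ Hardy := by
  rw [mem_Hardy_iff]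
  intro n hn
  rw [inner_eL_kz hz, if_neg (by omega)]

lemma coe_kzH {z : ℂ} (hz : ‖z‖ < 1) : (kzH z : L2) = kz z := by
  rw [kzH]
  exact (Submodule.starProjection_eq_self_iff (K := Hardy)).mpr (kz_mem_Hardy hz)

lemma integral_kfun_fourier {z : ℂ} (hz : ‖z‖ < 1) (j : ℕ) :
    ∫ t, conj (kfun z t) * cw t ^ j ∂μT
      = ((Real.sqrt (1 - ‖z‖ ^ 2) : ℝ) : ℂ) * z ^ j := by
  set c : ℂ := ((Real.sqrt (1 - ‖z‖ ^ 2) : ℝ) : ℂ) with hc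
  have h0 : ∫ t, fourier (-(j:ℤ)) t * kfun z t ∂μT = c * (conj z) ^ j := by
    have h1 := inner_eL_kz hz (j : ℤ)
    rw [inner_eL_eq, if_pos (Int.ofNat_nonneg j), Int.toNat_natCast] at h1
    rw [← h1]
    refine integral_congr_ae ?_
    filter_upwards [coeFn_kz hz] with t ht
    rw [ht]
  calc ∫ t, conj (kfun z t) * cw t ^ j ∂μT
      = ∫ t, conj (fourier (-(j:ℤ)) t * kfun z t) ∂μT := by
        refine integral_congr_ae (Filter.Eventually.of_forall fun t => ?_)
        show conj (kfun z t) * cw t ^ j = conj (fourier (-(j:ℤ)) t * kfun z t)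
        rw [map_mul, conj_fourier, neg_neg, cw_pow]
        ring
    _ = conj (∫ t, fourier (-(j:ℤ)) t * kfun z t ∂μT) := integral_conj
    _ = c * z ^ j := by
        rw [h0, map_mul, map_pow, Complex.conj_conj, hc, Complex.conj_ofReal]

lemma inner_kz_kz {z : ℂ} (hz : ‖z‖ < 1) : ⟪kz z, kz z⟫_ℂ = 1 := by
  set c : ℂ := ((Real.sqrt (1 - ‖z‖ ^ 2) : ℝ) : ℂ) with hc
  have h1 : ⟪kz z, kz z⟫_ℂ
      = ∫ t, (fun t => c * conj (kfun z t)) t / (1 - conj z * cw t) ∂μT := by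
    rw [inner_L2]
    refine integral_congr_ae ?_
    filter_upwards [coeFn_kz hz] with t ht
    have hk : kfun z t = c / (1 - conj z * cw t) := rfl
    rw [ht]
    show conj (kfun z t) * kfun z t = c * conj (kfun z t) / (1 - conj z * cw t)
    rw [hk]
    ring
  have hcont : Continuous fun t => c * conj (kfun z t) :=
    continuous_const.mul (Complex.continuous_conj.comp (continuous_kfun hz))
  have hb : ∀ t, ‖c * conj (kfun z t)‖
      ≤ ‖c‖ * (Real.sqrt (1 - ‖z‖ ^ 2) / (1 - ‖z‖)) := fun t => by
    rw [norm_mul, RCLike.norm_conj]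
    exact mul_le_mul_of_nonneg_left (norm_kfun_le hz t) (norm_nonneg c)
  have h2 := hasSum_geom_integral hz _ hcont _ hb
  rw [← h1] at h2
  have h3 : ∀ j : ℕ, (conj z) ^ j * ∫ t, (fun t => c * conj (kfun z t)) t * cw t ^ j ∂μT
      = c ^ 2 * (((‖z‖ : ℂ)) ^ 2) ^ j := by
    intro j
    have : ∀ t : 𝕋, (c * conj (kfun z t)) * cw t ^ j = c * (conj (kfun z t) * cw t ^ j) :=
      fun t => by ring
    simp_rw [this]
    rw [integral_const_mul, integral_kfun_fourier hz j, ← hc]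
    have hzz : conj z * z = ((‖z‖ : ℂ)) ^ 2 := by
      rw [mul_comm, Complex.mul_conj']
    rw [← hzz]
    rw [mul_pow]
    ring
  simp_rw [h3] at h2
  have hnorm2 : ‖((‖z‖ : ℂ)) ^ 2‖ < 1 := by
    rw [norm_pow, Complex.norm_real, Real.norm_eq_abs, _root_.abs_of_nonneg (norm_nonneg z)]
    nlinarith [norm_nonneg z]
  have hgeom := (hasSum_geometric_of_norm_lt_one hnorm2).mul_left (c ^ 2)
  have := h2.unique hgeom
  rw [this]
  have hpos : (0:ℝ) < 1 - ‖z‖ ^ 2 := by nlinarith [norm_nonneg z]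
  have hc2 : c ^ 2 = ((1 - ‖z‖ ^ 2 : ℝ) : ℂ) := by
    rw [hc, ← Complex.ofReal_pow, Real.sq_sqrt hpos.le]
  have hden : (1 : ℂ) - ((‖z‖ : ℂ)) ^ 2 = ((1 - ‖z‖ ^ 2 : ℝ) : ℂ) := by
    push_cast
    ring
  rw [hc2, hden]
  have hne : ((1 - ‖z‖ ^ 2 : ℝ) : ℂ) ≠ 0 := Complex.ofReal_ne_zero.mpr hpos.ne'
  exact mul_inv_cancel₀ hne

/-! ### Properties of the antiunitary `V` -/

lemma Vop_add (a b : L2) : Vop (a + b) = Vop a + Vop b := by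
  apply MeasureTheory.Lp.ext
  filter_upwards [coeFn_Vop (a + b), coeFn_Vop a, coeFn_Vop b,
    MeasureTheory.Lp.coeFn_add (Vop a) (Vop b), MeasureTheory.Lp.coeFn_add a b]
    with t h1 h2 h3 h4 h5
  rw [h1, h4, Pi.add_apply, h2, h3, h5, Pi.add_apply]
  rw [map_add]
  ring

lemma Vop_smul (c : ℂ) (a : L2) : Vop (c • a) = conj c • Vop a := by
  apply MeasureTheory.Lp.ext
  filter_upwards [coeFn_Vop (c • a), coeFn_Vop a,
    MeasureTheory.Lp.coeFn_smul (conj c) (Vop a), MeasureTheory.Lp.coeFn_smul c a]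
    with t h1 h2 h3 h4
  rw [h1, h3, Pi.smul_apply, h2, h4, Pi.smul_apply]
  simp only [smul_eq_mul, map_mul]
  ring

lemma Vop_zero : Vop (0 : L2) = 0 := by
  have := Vop_smul 0 0
  rw [zero_smul, map_zero, zero_smul] at this
  exact this

lemma Vop_Vop (a : L2) : Vop (Vop a) = a := by
  apply MeasureTheory.Lp.ext
  filter_upwards [coeFn_Vop (Vop a), coeFn_Vop a] with t h1 h2
  rw [h1, h2]
  simp only [map_mul, Complex.conj_conj]
  calc conj (cw t) * (cw t * a t) = (conj (cw t) * cw t) * a t := by ring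
    _ = a t := by rw [conj_cw_mul_cw, one_mul]

lemma norm_Vop (a : L2) : ‖Vop a‖ = ‖a‖ := by
  rw [Vop, MeasureTheory.Lp.norm_toLp, MeasureTheory.Lp.norm_def]
  congr 1
  apply eLpNorm_congr_norm_ae
  filter_upwards with t
  rw [norm_mul, RCLike.norm_conj, RCLike.norm_conj, norm_cw, one_mul]

lemma Vop_sub (a b : L2) : Vop (a - b) = Vop a - Vop b := by
  have h1 : a - b + b = a := by abel
  have h2 := Vop_add (a - b) b
  rw [h1] at h2
  rw [eq_sub_iff_add_eq, ← h2]

lemma isometry_Vop : Isometry Vop := by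
  refine Isometry.of_dist_eq fun a b => ?_
  rw [dist_eq_norm, dist_eq_norm, ← Vop_sub, norm_Vop]

lemma continuous_Vop : Continuous Vop := isometry_Vop.continuous

lemma inner_Vop_symm (a b : L2) : ⟪Vop a, b⟫_ℂ = ⟪Vop b, a⟫_ℂ := by
  rw [inner_L2, inner_L2]
  have h1 : ∀ u v : L2, ∫ t, conj ((Vop u : 𝕋 → ℂ) t) * v t ∂μT
      = ∫ t, cw t * u t * v t ∂μT := by
    intro u v
    refine integral_congr_ae ?_
    filter_upwards [coeFn_Vop u] with t ht
    rw [ht]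
    simp only [map_mul, Complex.conj_conj]
  rw [h1, h1]
  refine integral_congr_ae (Filter.Eventually.of_forall fun t => ?_)
  ring

lemma inner_Vop_Vop (a b : L2) : ⟪Vop a, Vop b⟫_ℂ = ⟪b, a⟫_ℂ := by
  rw [inner_Vop_symm, Vop_Vop]

lemma Vop_mem_orth {x : L2} (hx : x ∈ Hardy) : Vop x ∈ Hardyᗮ := by
  refine hardy_induction {x : L2 | Vop x ∈ Hardyᗮ} ?_ ?_ ?_ ?_ ?_ x hx
  · simp only [Set.mem_setOf_eq, Vop_zero]
    exact Submodule.zero_mem _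
  · intro a ha b hb
    simp only [Set.mem_setOf_eq, Vop_add] at *
    exact Submodule.add_mem _ ha hb
  · intro c a ha
    simp only [Set.mem_setOf_eq, Vop_smul] at *
    exact Submodule.smul_mem _ _ ha
  · exact IsClosed.preimage continuous_Vop (Submodule.isClosed_orthogonal _)
  · intro n
    simp only [Set.mem_setOf_eq, Vop_eL]
    exact eL_mem_orth (by omega)

lemma Vop_mem_Hardy {x : L2} (hx : x ∈ Hardyᗮ) : Vop x ∈ Hardy := by
  refine orth_induction {x : L2 | Vop x ∈ Hardy} ?_ ?_ ?_ ?_ ?_ x hx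
  · simp only [Set.mem_setOf_eq, Vop_zero]
    exact Submodule.zero_mem _
  · intro a ha b hb
    simp only [Set.mem_setOf_eq, Vop_add] at *
    exact Submodule.add_mem _ ha hb
  · intro c a ha
    simp only [Set.mem_setOf_eq, Vop_smul] at *
    exact Submodule.smul_mem _ _ ha
  · exact IsClosed.preimage continuous_Vop (Submodule.isClosed_topologicalClosure _)
  · intro m
    simp only [Set.mem_setOf_eq, Vop_eL]
    have : (-1 - (-1 - (m:ℤ)) : ℤ) = m := by ring
    rw [this]
    exact eL_mem_Hardy m

lemma Pfull_eq_self {x : L2} (hx : x ∈ Hardy) : Pfull x = x :=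
  (Submodule.starProjection_eq_self_iff (K := Hardy)).mpr hx

lemma Pfull_eq_zero {x : L2} (hx : x ∈ Hardyᗮ) : Pfull x = 0 := by
  rw [Pfull_apply, Submodule.orthogonalProjectionOnto_apply_of_mem_orthogonal hx,
    Submodule.coe_zero]

lemma Pfull_Vop (u : L2) : Pfull (Vop u) = Vop (u - Pfull u) := by
  have hdecomp : Vop u = Vop (Pfull u) + Vop (u - Pfull u) := by
    rw [← Vop_add, add_sub_cancel]
  rw [hdecomp, map_add, Pfull_eq_zero (Vop_mem_orth (by rw [Pfull_apply]; exact Submodule.coe_mem _)),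
    Pfull_eq_self (Vop_mem_Hardy (sub_Pfull_mem_orth u)), zero_add]

/-! ### Hankel and Toeplitz operators -/

lemma Hankel_apply (f : 𝕋 → ℂ) (h : Hardy) :
    Hankel f h = mulCLM f ↑h - Pfull (mulCLM f ↑h) := rfl

lemma Toeplitz_apply (f : 𝕋 → ℂ) (h : Hardy) :
    Toeplitz f h = Hardy.orthogonalProjectionOnto (mulCLM f ↑h) := rfl

lemma Hankel_mem_orth (f : 𝕋 → ℂ) (h : Hardy) : Hankel f h ∈ Hardyᗮ := by
  rw [Hankel_apply]
  exact sub_Pfull_mem_orth _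

lemma coe_Toeplitz_phiC {z : ℂ} (hz : ‖z‖ < 1) (h : Hardy) :
    (↑(Toeplitz (phiC z) h) : L2) = mulCLM (phiC z) ↑h := by
  rw [Toeplitz_apply]
  exact (Submodule.starProjection_eq_self_iff (K := Hardy)).mpr (mulCLM_phiC_mem_Hardy hz (Submodule.coe_mem h))

lemma mulCLM_comm {f g : 𝕋 → ℂ} (hf : MemLp f ⊤ μT) (hg : MemLp g ⊤ μT) (x : L2) :
    mulCLM f (mulCLM g x) = mulCLM g (mulCLM f x) := by
  apply MeasureTheory.Lp.ext
  filter_upwards [coeFn_mulCLM hf (mulCLM g x), coeFn_mulCLM hg x,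
    coeFn_mulCLM hg (mulCLM f x), coeFn_mulCLM hf x] with t h1 h2 h3 h4
  rw [h1, h3, h2, h4]
  ring

lemma Hankel_Toeplitz {z : ℂ} (hz : ‖z‖ < 1) {g : 𝕋 → ℂ} (hg : MemLp g ⊤ μT) (h : Hardy) :
    Hankel g (Toeplitz (phiC z) h)
      = mulCLM (phiC z) (Hankel g h) - Pfull (mulCLM (phiC z) (Hankel g h)) := by
  rw [Hankel_apply, coe_Toeplitz_phiC hz, mulCLM_comm hg (memLinf_phiC hz), Hankel_apply]
  rw [map_sub (mulCLM (phiC z)), map_sub Pfull]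
  have hB : Pfull (mulCLM (phiC z) (Pfull (mulCLM g ↑h))) = mulCLM (phiC z) (Pfull (mulCLM g ↑h)) :=
    Pfull_eq_self (mulCLM_phiC_mem_Hardy hz (by rw [Pfull_apply]; exact Submodule.coe_mem _))
  rw [hB]
  abel

lemma inner_reduce_Hardy (w v : L2) (hv : v ∈ Hardy) : ⟪w, v⟫_ℂ = ⟪Pfull w, v⟫_ℂ := by
  have h0 : ⟪w - Pfull w, v⟫_ℂ = 0 := inner_zero_of_mem_orth' (sub_Pfull_mem_orth w) hv
  calc ⟪w, v⟫_ℂ = ⟪Pfull w + (w - Pfull w), v⟫_ℂ := by rw [add_sub_cancel]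
    _ = ⟪Pfull w, v⟫_ℂ + ⟪w - Pfull w, v⟫_ℂ := inner_add_left _ _ _
    _ = ⟪Pfull w, v⟫_ℂ := by rw [h0, add_zero]

lemma inner_decomp (a b : L2) :
    ⟪a, b⟫_ℂ = ⟪Pfull a, Pfull b⟫_ℂ + ⟪a - Pfull a, b - Pfull b⟫_ℂ := by
  have hPa : Pfull a ∈ Hardy := by rw [Pfull_apply]; exact Submodule.coe_mem _
  have hPb : Pfull b ∈ Hardy := by rw [Pfull_apply]; exact Submodule.coe_mem _
  have h1 : ⟪Pfull a, b - Pfull b⟫_ℂ = 0 := inner_zero_of_mem_orth hPa (sub_Pfull_mem_orth b)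
  have h2 : ⟪a - Pfull a, Pfull b⟫_ℂ = 0 := inner_zero_of_mem_orth' (sub_Pfull_mem_orth a) hPb
  calc ⟪a, b⟫_ℂ = ⟪Pfull a + (a - Pfull a), Pfull b + (b - Pfull b)⟫_ℂ := by
        rw [add_sub_cancel, add_sub_cancel]
    _ = ⟪Pfull a, Pfull b⟫_ℂ + ⟪Pfull a, b - Pfull b⟫_ℂ + (⟪a - Pfull a, Pfull b⟫_ℂ
        + ⟪a - Pfull a, b - Pfull b⟫_ℂ) := by
        rw [inner_add_left, inner_add_right, inner_add_right]
    _ = ⟪Pfull a, Pfull b⟫_ℂ + ⟪a - Pfull a, b - Pfull b⟫_ℂ := by rw [h1, h2]; ring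

lemma inner_mulCLM_phiC {z : ℂ} (hz : ‖z‖ < 1) (a b : L2) :
    ⟪mulCLM (phiC z) a, mulCLM (phiC z) b⟫_ℂ = ⟪a, b⟫_ℂ := by
  rw [inner_L2, inner_L2]
  refine integral_congr_ae ?_
  filter_upwards [coeFn_mulCLM (memLinf_phiC hz) a, coeFn_mulCLM (memLinf_phiC hz) b]
    with t h1 h2
  rw [h1, h2, map_mul]
  have h3 : conj (phiC z t) * phiC z t = 1 := by
    rw [mul_comm, Complex.mul_conj', norm_phiC hz]
    norm_num
  calc conj (phiC z t) * conj (a t) * (phiC z t * b t)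
      = (conj (phiC z t) * phiC z t) * (conj (a t) * b t) := by ring
    _ = conj (a t) * b t := by rw [h3, one_mul]

lemma rankOne_apply {E F : Type*} [NormedAddCommGroup E] [InnerProductSpace ℂ E]
    [NormedAddCommGroup F] [InnerProductSpace ℂ F] (x : F) (y : E) (u : E) :
    rankOne x y u = ⟪y, u⟫_ℂ • x := rfl

lemma Pfull_mulCLM_phiC_of_orth {z : ℂ} (hz : ‖z‖ < 1) {y : L2} (hy : y ∈ Hardyᗮ) :
    Pfull (mulCLM (phiC z) y) = -(⟪Vop (kz z), y⟫_ℂ • kz z) := by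
  set T : L2 →L[ℂ] L2 := Pfull.comp (mulCLM (phiC z)) + rankOne (kz z) (Vop (kz z)) with hT
  have hTapp : ∀ y : L2, T y = Pfull (mulCLM (phiC z) y) + ⟪Vop (kz z), y⟫_ℂ • kz z :=
    fun y => rfl
  suffices hzero : T y = 0 by
    rw [hTapp] at hzero
    exact eq_neg_of_add_eq_zero_left hzero
  refine orth_induction {y : L2 | T y = 0} ?_ ?_ ?_ ?_ ?_ y hy
  · simp only [Set.mem_setOf_eq, map_zero]
  · intro a ha b hb
    simp only [Set.mem_setOf_eq, map_add] at *
    rw [ha, hb, add_zero]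
  · intro c a ha
    simp only [Set.mem_setOf_eq, _root_.map_smul] at *
    rw [ha, smul_zero]
  · exact isClosed_eq T.continuous continuous_const
  · intro m
    simp only [Set.mem_setOf_eq]
    rw [hTapp]
    set c : ℂ := ((Real.sqrt (1 - ‖z‖ ^ 2) : ℝ) : ℂ) with hc
    have hcoef : ⟪Vop (kz z), (fourierLp 2 (-1 - m) : L2)⟫_ℂ = c * (conj z) ^ m := by
      rw [inner_Vop_symm, Vop_eL]
      have hidx : (-1 - (-1 - (m:ℤ)) : ℤ) = m := by ring
      rw [hidx, inner_eL_kz hz, if_pos (Int.ofNat_nonneg m), Int.toNat_natCast]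
    rw [hcoef]
    -- show M_φ e_{-1-m} + (c z̄^m) • kz ∈ Hardyᗮ, then project
    have hmem : mulCLM (phiC z) (fourierLp 2 (-1 - m) : L2) + (c * (conj z) ^ m) • kz z
        ∈ Hardyᗮ := by
      rw [mem_orth_iff]
      intro n
      rw [inner_add_right, inner_smul_right, inner_eL_mulCLM_phiC hz, integral_fourier_phiC hz,
        inner_eL_kz hz, if_pos (Int.ofNat_nonneg n), Int.toNat_natCast]
      rw [if_pos (by omega), if_pos (by omega)]
      have ht1 : (-((-1 - (m:ℤ)) - (n:ℤ))).toNat = m + n + 1 := by omega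
      have ht2 : (-((-1 - (m:ℤ)) - (n:ℤ)) - 1).toNat = m + n := by omega
      rw [ht1, ht2]
      have h1 : z * conj z = 1 - c ^ 2 := by
        have hs : Real.sqrt (1 - ‖z‖ ^ 2) ^ 2 = 1 - ‖z‖ ^ 2 :=
          Real.sq_sqrt (by nlinarith [norm_nonneg z, hz])
        rw [Complex.mul_conj', hc]
        norm_cast
        rw [hs]
        ring
      linear_combination (conj z) ^ (m + n) * h1
    have hproj := Pfull_eq_zero hmem
    rw [map_add, _root_.map_smul, Pfull_eq_self (kz_mem_Hardy hz)] at hproj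
    exact hproj

/-! ### The two kernel identities -/

lemma inner_Vkz_Hankel {z : ℂ} (hz : ‖z‖ < 1) {f : 𝕋 → ℂ} (hf : MemLp f ⊤ μT) (u : L2) :
    ⟪Vop (kz z), Hankel f (Hardy.orthogonalProjectionOnto (Vop u))⟫_ℂ
      = conj ⟪Hankel f (kzH z), u⟫_ℂ := by
  set q : L2 := u - Pfull u with hq
  have hVk_orth : Vop (kz z) ∈ Hardyᗮ := Vop_mem_orth (kz_mem_Hardy hz)
  have hq_orth : q ∈ Hardyᗮ := sub_Pfull_mem_orth u
  have hcoeh : (↑(Hardy.orthogonalProjectionOnto (Vop u)) : L2) = Vop q := by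
    rw [← Pfull_apply, Pfull_Vop]
  have hPmem : ∀ x : L2, Pfull x ∈ Hardy := fun x => by
    rw [Pfull_apply]; exact Submodule.coe_mem _
  have hLHS : ⟪Vop (kz z), Hankel f (Hardy.orthogonalProjectionOnto (Vop u))⟫_ℂ
      = ⟪Vop (kz z), mulCLM f (Vop q)⟫_ℂ := by
    rw [Hankel_apply, hcoeh, inner_sub_right,
      inner_zero_of_mem_orth' hVk_orth (hPmem _), sub_zero]
  have hkzH : (↑(kzH z) : L2) = kz z := coe_kzH hz
  have hRHS : ⟪Hankel f (kzH z), u⟫_ℂ = ⟪mulCLM f (kz z), q⟫_ℂ := by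
    have h1 : ⟪Hankel f (kzH z), u⟫_ℂ = ⟪Hankel f (kzH z), q⟫_ℂ := by
      have h0 : ⟪Hankel f (kzH z), Pfull u⟫_ℂ =
          0 := inner_zero_of_mem_orth' (Hankel_mem_orth _ _) (hPmem _)
      calc ⟪Hankel f (kzH z), u⟫_ℂ = ⟪Hankel f (kzH z), Pfull u + q⟫_ℂ := by
            rw [hq, add_sub_cancel]
        _ = ⟪Hankel f (kzH z), Pfull u⟫_ℂ + ⟪Hankel f (kzH z), q⟫_ℂ := inner_add_right _ _ _
        _ = ⟪Hankel f (kzH z), q⟫_ℂ := by rw [h0, zero_add]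
    rw [h1, Hankel_apply, hkzH, inner_sub_left,
      inner_zero_of_mem_orth (hPmem _) hq_orth, sub_zero]
  rw [hLHS, hRHS, inner_L2, inner_L2, ← integral_conj]
  refine integral_congr_ae ?_
  filter_upwards [coeFn_Vop (kz z), coeFn_mulCLM hf (Vop q), coeFn_Vop q,
    coeFn_mulCLM hf (kz z)] with t h1 h2 h3 h4
  rw [h1, h2, h3, h4]
  simp only [map_mul, Complex.conj_conj]
  have h5 := conj_cw_mul_cw t
  linear_combination ((kz z : 𝕋 → ℂ) t * f t * conj (q t)) * h5

lemma inner_Hankel_Vkz {z : ℂ} (hz : ‖z‖ < 1) {f : 𝕋 → ℂ} (hf : MemLp f ⊤ μT) (h' : Hardy) :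
    ⟪Hankel f h', Vop (kz z)⟫_ℂ = ⟪(↑h' : L2), Vop (Hankel f (kzH z))⟫_ℂ := by
  have hPmem : ∀ x : L2, Pfull x ∈ Hardy := fun x => by
    rw [Pfull_apply]; exact Submodule.coe_mem _
  have hVk_orth : Vop (kz z) ∈ Hardyᗮ := Vop_mem_orth (kz_mem_Hardy hz)
  have hkzH : (↑(kzH z) : L2) = kz z := coe_kzH hz
  have hLHS : ⟪Hankel f h', Vop (kz z)⟫_ℂ = ⟪mulCLM f ↑h', Vop (kz z)⟫_ℂ := by
    rw [Hankel_apply, inner_sub_left, inner_zero_of_mem_orth (hPmem _) hVk_orth, sub_zero]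
  have hRHS : ⟪(↑h' : L2), Vop (Hankel f (kzH z))⟫_ℂ
      = ⟪(↑h' : L2), Vop (mulCLM f (kz z))⟫_ℂ := by
    rw [Hankel_apply, hkzH, Vop_sub, inner_sub_right,
      inner_zero_of_mem_orth (Submodule.coe_mem h') (Vop_mem_orth (hPmem _)), sub_zero]
  rw [hLHS, hRHS, inner_L2, inner_L2]
  refine integral_congr_ae ?_
  filter_upwards [coeFn_mulCLM hf (↑h' : L2), coeFn_Vop (kz z), coeFn_Vop (mulCLM f (kz z)),
    coeFn_mulCLM hf (kz z)] with t h1 h2 h3 h4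
  rw [h1, h2, h3, h4]
  simp only [map_mul, Complex.conj_conj]
  ring

/-! ### The main bilinear form identity -/

lemma form_identity {z : ℂ} (hz : ‖z‖ < 1) {f g : 𝕋 → ℂ}
    (hf : MemLp f ⊤ μT) (hg : MemLp g ⊤ μT) (h h' : Hardy) :
    ⟪Hankel f h', Hankel g h⟫_ℂ
      - ⟪Hankel f (Toeplitz (phiC z) h'), Hankel g (Toeplitz (phiC z) h)⟫_ℂ
      = ⟪Hankel f h', Vop (kz z)⟫_ℂ * ⟪Vop (kz z), Hankel g h⟫_ℂ := by
  set a' : L2 := Hankel f h' with ha'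
  set a : L2 := Hankel g h with ha
  have h1 : ⟪a', a⟫_ℂ = ⟪mulCLM (phiC z) a', mulCLM (phiC z) a⟫_ℂ :=
    (inner_mulCLM_phiC hz _ _).symm
  have h2 := inner_decomp (mulCLM (phiC z) a') (mulCLM (phiC z) a)
  have h3 : mulCLM (phiC z) a' - Pfull (mulCLM (phiC z) a')
      = Hankel f (Toeplitz (phiC z) h') := (Hankel_Toeplitz hz hf h').symm
  have h4 : mulCLM (phiC z) a - Pfull (mulCLM (phiC z) a)
      = Hankel g (Toeplitz (phiC z) h) := (Hankel_Toeplitz hz hg h).symm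
  have h5 : Pfull (mulCLM (phiC z) a') = -(⟪Vop (kz z), a'⟫_ℂ • kz z) :=
    Pfull_mulCLM_phiC_of_orth hz (Hankel_mem_orth f h')
  have h6 : Pfull (mulCLM (phiC z) a) = -(⟪Vop (kz z), a⟫_ℂ • kz z) :=
    Pfull_mulCLM_phiC_of_orth hz (Hankel_mem_orth g h)
  have h7 : ⟪Pfull (mulCLM (phiC z) a'), Pfull (mulCLM (phiC z) a)⟫_ℂ
      = ⟪a', Vop (kz z)⟫_ℂ * ⟪Vop (kz z), a⟫_ℂ := by
    rw [h5, h6, inner_neg_neg, inner_smul_left, inner_smul_right, inner_kz_kz hz,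
      inner_conj_symm]
    ring
  rw [h3, h4, h7] at h2
  rw [← h1] at h2
  linear_combination h2

lemma Vop_finset_sum {ι : Type*} (s : Finset ι) (v : ι → L2) :
    Vop (∑ i ∈ s, v i) = ∑ i ∈ s, Vop (v i) := by
  classical
  induction s using Finset.induction_on with
  | empty => simpa using Vop_zero
  | insert _ _ hnot ih => rw [Finset.sum_insert hnot, Vop_add, ih, Finset.sum_insert hnot]
/-- `V⁻¹ [∑ i (H_{f_i}* H_{g_i} − T_{φ_z}* H_{f_i}* H_{g_i} T_{φ_z})] V
= ∑ i, H_{f_i} k_z ⊗ H_{g_i} k_z`; in particular the operator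
`∑ i (H_{f_i}* H_{g_i} − T_{φ_z}* H_{f_i}* H_{g_i} T_{φ_z})` has rank at most `n`. -/
theorem Vop_conj_sum_hankel_eq_sum_rankOne (n : ℕ) (f g : Fin n → 𝕋 → ℂ)
    (hf : ∀ i, MemLp (f i) ⊤ μT) (hg : ∀ i, MemLp (g i) ⊤ μT)
    (z : ℂ) (hz : ‖z‖ < 1)
    (S D : Hardy →L[ℂ] Hardy)
    (hS : S = ∑ i, (Hankel (f i)).adjoint.comp (Hankel (g i)))
    (hD : D = S - (Toeplitz (phiC z)).adjoint.comp (S.comp (Toeplitz (phiC z)))) :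
    (∀ u : L2, Vop ↑(D (Hardy.orthogonalProjectionOnto (Vop u)))
        = (∑ i, rankOne (Hankel (f i) (kzH z)) (Hankel (g i) (kzH z))) u) ∧
    LinearMap.rank (D : Hardy →ₗ[ℂ] Hardy) ≤ n := by
  have hSform : ∀ y h' : Hardy, ⟪h', S y⟫_ℂ = ∑ i, ⟪Hankel (f i) h', Hankel (g i) y⟫_ℂ := by
    intro y h'
    rw [hS, ContinuousLinearMap.sum_apply, inner_sum]
    refine Finset.sum_congr rfl fun i _ => ?_
    rw [ContinuousLinearMap.comp_apply, ContinuousLinearMap.adjoint_inner_right]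
  have hDform : ∀ y h' : Hardy, ⟪h', D y⟫_ℂ
      = ∑ i, (⟪Hankel (f i) h', Hankel (g i) y⟫_ℂ
        - ⟪Hankel (f i) (Toeplitz (phiC z) h'), Hankel (g i) (Toeplitz (phiC z) y)⟫_ℂ) := by
    intro y h'
    rw [hD, ContinuousLinearMap.sub_apply, inner_sub_right,
      ContinuousLinearMap.comp_apply, ContinuousLinearMap.adjoint_inner_right,
      ContinuousLinearMap.comp_apply, hSform, hSform, ← Finset.sum_sub_distrib]
  have hpart1 : ∀ u : L2, Vop ↑(D (Hardy.orthogonalProjectionOnto (Vop u)))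
      = (∑ i, rankOne (Hankel (f i) (kzH z)) (Hankel (g i) (kzH z))) u := by
    intro u
    set h : Hardy := Hardy.orthogonalProjectionOnto (Vop u) with hh
    have hkey : ∀ h' : Hardy, ⟪h', D h⟫_ℂ
        = ∑ i, ⟪(↑h' : L2), Vop (Hankel (f i) (kzH z))⟫_ℂ
            * conj ⟪Hankel (g i) (kzH z), u⟫_ℂ := by
      intro h'
      rw [hDform h h']
      refine Finset.sum_congr rfl fun i _ => ?_
      rw [form_identity hz (hf i) (hg i) h h', inner_Hankel_Vkz hz (hf i) h', hh,
        inner_Vkz_Hankel hz (hg i) u]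
    have hY : (↑(D h) : L2)
        = ∑ i, conj ⟪Hankel (g i) (kzH z), u⟫_ℂ • Vop (Hankel (f i) (kzH z)) := by
      apply ext_inner_left ℂ
      intro w
      have hmemL : (↑(D h) : L2) ∈ Hardy := Submodule.coe_mem _
      have hmemR : (∑ i, conj ⟪Hankel (g i) (kzH z), u⟫_ℂ • Vop (Hankel (f i) (kzH z)))
          ∈ Hardy := Submodule.sum_mem _ fun i _ =>
        Submodule.smul_mem _ _ (Vop_mem_Hardy (Hankel_mem_orth _ _))
      rw [inner_reduce_Hardy w _ hmemL, inner_reduce_Hardy w _ hmemR, Pfull_apply]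
      rw [← Submodule.coe_inner, hkey (Hardy.orthogonalProjectionOnto w), inner_sum]
      refine Finset.sum_congr rfl fun i _ => ?_
      rw [inner_smul_right]
      ring
    rw [hY, Vop_finset_sum, ContinuousLinearMap.sum_apply]
    refine Finset.sum_congr rfl fun i _ => ?_
    rw [Vop_smul, Complex.conj_conj, Vop_Vop, rankOne_apply]
  refine ⟨hpart1, ?_⟩
  set v : Fin n → Hardy := fun i =>
    ⟨Vop (Hankel (f i) (kzH z)), Vop_mem_Hardy (Hankel_mem_orth _ _)⟩ with hv
  have hrange : LinearMap.range (D : Hardy →ₗ[ℂ] Hardy) ≤ Submodule.span ℂ (Set.range v) := by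
    rintro x ⟨h0, rfl⟩
    have h1 := hpart1 (Vop ↑h0)
    rw [Vop_Vop, Submodule.orthogonalProjectionOnto_mem_subspace_eq_self] at h1
    have h2 : (↑(D h0) : L2) = Vop ((∑ i, rankOne (Hankel (f i) (kzH z))
        (Hankel (g i) (kzH z))) (Vop ↑h0)) := by
      rw [← h1, Vop_Vop]
    rw [ContinuousLinearMap.sum_apply] at h2
    have h3 : (↑(D h0) : L2) = ∑ i, conj ⟪Hankel (g i) (kzH z), Vop ↑h0⟫_ℂ
        • Vop (Hankel (f i) (kzH z)) := by
      rw [h2, Vop_finset_sum]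
      refine Finset.sum_congr rfl fun i _ => ?_
      rw [rankOne_apply, Vop_smul]
    have h4 : D h0 = ∑ i, conj ⟪Hankel (g i) (kzH z), Vop ↑h0⟫_ℂ • v i := by
      apply Subtype.ext
      rw [h3]
      push_cast
      rfl
    show (D : Hardy →ₗ[ℂ] Hardy) h0 ∈ _
    rw [show (D : Hardy →ₗ[ℂ] Hardy) h0 = D h0 from rfl, h4]
    exact Submodule.sum_mem _ fun i _ =>
      Submodule.smul_mem _ _ (Submodule.subset_span ⟨i, rfl⟩)
  calc LinearMap.rank (D : Hardy →ₗ[ℂ] Hardy)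
      ≤ Module.rank ℂ (Submodule.span ℂ (Set.range v)) := Submodule.rank_mono hrange
    _ ≤ Cardinal.mk (Set.range v) := rank_span_le _
    _ ≤ Cardinal.mk (Fin n) := Cardinal.mk_range_le
    _ = n := Cardinal.mk_fin n

end HardySpace
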